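/- Define u̅(t,x) = ρ(t, x − ξ(t)) with ρ(t,y) = θ[1 − E(y/(2√t))/E(ξ₀)] and ξ(t) = M t^{1/2 − 1/(p+1)} for p > 1, M > 0. Then for t > 0 and x > ξ(t), u̅_t − u̅_{xx} = ((p−1)/(2(p+1))) M t^{(p−1)/(2(p+1)) − 1} · (θ/(E(ξ₀)√(πt))) e^{−(x−ξ(t))²/(4t)} ≥ 0. -/

import Mathlib

open Real

noncomputable def errE (x : ℝ) : ℝ := (2 / Real.sqrt π) * ∫ s in (0:ℝ)..x, Real.exp (-s^2)

lemma errE_hasDerivAt (x : ℝ) :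
    HasDerivAt errE ((2 / Real.sqrt π) * Real.exp (-x^2)) x := by
  have hc : Continuous fun s : ℝ => Real.exp (-s^2) := by continuity
  have h := intervalIntegral.integral_hasDerivAt_right (hc.intervalIntegrable 0 x)
    (hc.stronglyMeasurableAtFilter _ _) hc.continuousAt
  exact h.const_mul (2 / Real.sqrt π)

lemma errE_pos {x : ℝ} (hx : 0 < x) : 0 < errE x := by
  have hc : Continuous fun s : ℝ => Real.exp (-s^2) := by continuity
  have h1 : 0 < ∫ s in (0:ℝ)..x, Real.exp (-s^2) := by
    apply intervalIntegral.intervalIntegral_pos_of_pos_on (hc.intervalIntegrable 0 x)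
    · intro s _
      exact Real.exp_pos _
    · exact hx
  have h2 : 0 < 2 / Real.sqrt π := by positivity
  exact mul_pos h2 h1

theorem upper_solution_ineq (θ ξ₀ M p : ℝ) (hθ : 0 < θ) (hξ : 0 < ξ₀)
    (hM : 0 < M) (hp : 1 < p)
    (ρ : ℝ → ℝ → ℝ)
    (hρ : ∀ t y, ρ t y = θ * (1 - errE (y / (2 * Real.sqrt t)) / errE ξ₀))
    (ξ : ℝ → ℝ) (hξ' : ∀ t, ξ t = M * t ^ ((1:ℝ)/2 - 1/(p + 1)))
    (ub : ℝ → ℝ → ℝ) (hub : ∀ t x, ub t x = ρ t (x - ξ t)) :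
    ∀ t x : ℝ, 0 < t → ξ t < x →
      deriv (fun τ => ub τ x) t - deriv (deriv (fun y => ub t y)) x
        = ((p - 1) / (2 * (p + 1))) * M * t ^ ((p - 1) / (2 * (p + 1)) - 1)
            * (θ / (errE ξ₀ * Real.sqrt (π * t))) * Real.exp (-(x - ξ t)^2 / (4 * t)) ∧
      0 ≤ deriv (fun τ => ub τ x) t - deriv (deriv (fun y => ub t y)) x := by
  intro t x ht hx
  have hE : 0 < errE ξ₀ := errE_pos hξ
  have hπ : 0 < Real.sqrt π := Real.sqrt_pos.mpr Real.pi_pos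
  set α : ℝ := (1:ℝ)/2 - 1/(p + 1) with hα
  set c : ℝ := θ / errE ξ₀ with hc
  set s : ℝ := Real.sqrt t with hsdef
  have hs : 0 < s := Real.sqrt_pos.mpr ht
  have hs2 : s ^ 2 = t := Real.sq_sqrt ht.le
  set Y : ℝ := x - ξ t with hY
  set z : ℝ := Y / (2 * s) with hz
  set A : ℝ := t ^ (α - 1) with hA
  have hA0 : 0 < A := Real.rpow_pos_of_pos ht _
  -- the time derivative
  have hfun1 : (fun τ => ub τ x) = fun τ => θ - c * errE ((x - M * τ ^ α) / (2 * Real.sqrt τ)) := by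
    funext τ
    rw [hub, hρ, hξ']
    ring
  have hsq : HasDerivAt (fun τ : ℝ => 2 * Real.sqrt τ) (2 * (1 / (2 * s))) t := by
    simpa using (Real.hasDerivAt_sqrt ht.ne').const_mul 2
  have hnum : HasDerivAt (fun τ : ℝ => x - M * τ ^ α) (-(M * (α * A))) t := by
    have := ((Real.hasDerivAt_rpow_const (p := α) (Or.inl ht.ne')).const_mul M).const_sub x
    simpa [hA] using this
  have hden_ne : (2 * s) ≠ 0 := by positivity
  have hh : HasDerivAt (fun τ : ℝ => (x - M * τ ^ α) / (2 * Real.sqrt τ))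
      ((-(M * (α * A)) * (2 * s) - (x - M * t ^ α) * (2 * (1 / (2 * s)))) / (2 * s) ^ 2) t := by
    exact hnum.div hsq hden_ne
  have hht : (x - M * t ^ α) / (2 * Real.sqrt t) = z := by
    rw [hz, hY, hξ']
  have htderiv : HasDerivAt (fun τ => ub τ x)
      (-(c * ((2 / Real.sqrt π) * Real.exp (-z ^ 2) *
        ((-(M * (α * A)) * (2 * s) - (x - M * t ^ α) * (2 * (1 / (2 * s)))) / (2 * s) ^ 2)))) t := by
    rw [hfun1]
    have hcomp := ((errE_hasDerivAt ((x - M * t ^ α) / (2 * Real.sqrt t))).comp t hh).const_mul c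
    rw [hht] at hcomp
    have h2 := hcomp.const_sub θ
    exact h2
  -- the space derivative function
  have hfun2 : (fun y => ub t y) = fun y => θ - c * errE ((y - ξ t) / (2 * s)) := by
    funext y
    rw [hub, hρ]
    ring
  have hspace : ∀ y : ℝ, HasDerivAt (fun y => ub t y)
      (-(c * ((2 / Real.sqrt π)) / (2 * s) * Real.exp (-((y - ξ t) / (2 * s)) ^ 2))) y := by
    intro y
    rw [hfun2]
    have hw : HasDerivAt (fun y : ℝ => (y - ξ t) / (2 * s)) (1 / (2 * s)) y := by
      simpa using ((hasDerivAt_id y).sub_const (ξ t)).div_const (2 * s)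
    have := ((errE_hasDerivAt ((y - ξ t) / (2 * s))).comp y hw).const_mul c
    have h2 := this.const_sub θ
    exact h2.congr_deriv (by ring)
  have hderiv_eq : deriv (fun y => ub t y) =
      fun y => -(c * ((2 / Real.sqrt π)) / (2 * s) * Real.exp (-((y - ξ t) / (2 * s)) ^ 2)) := by
    funext y
    exact (hspace y).deriv
  have hxderiv2 : HasDerivAt (deriv (fun y => ub t y))
      (-(c * ((2 / Real.sqrt π)) / (2 * s) *
        (Real.exp (-z ^ 2) * (-(2 * z) * (1 / (2 * s)))))) x := by
    rw [hderiv_eq]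
    have hw : HasDerivAt (fun y : ℝ => (y - ξ t) / (2 * s)) (1 / (2 * s)) x := by
      simpa using ((hasDerivAt_id x).sub_const (ξ t)).div_const (2 * s)
    have hinner : HasDerivAt (fun y : ℝ => -((y - ξ t) / (2 * s)) ^ 2)
        (-(2 * z) * (1 / (2 * s))) x := by
      have := ((hw.pow 2).neg)
      simpa [hz, hY, mul_comm, mul_assoc, mul_left_comm, Pi.neg_def, Pi.pow_def] using this
    have hexp := (Real.hasDerivAt_exp (-z ^ 2)).comp x (by simpa [hz, hY] using hinner)
    have := (hexp.const_mul (c * ((2 / Real.sqrt π)) / (2 * s))).neg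
    exact this.congr_deriv (by rw [hz, hY]; ring)
  -- compute LHS
  have hLHS : deriv (fun τ => ub τ x) t - deriv (deriv (fun y => ub t y)) x
      = c * (2 / Real.sqrt π) * Real.exp (-z ^ 2) * (M * α * A) / (2 * s) := by
    rw [htderiv.deriv, hxderiv2.deriv]
    have hξt : M * t ^ α = ξ t := (hξ' t).symm
    rw [hξt]
    have h4 : (2 * s) ^ 2 = 4 * t := by rw [mul_pow, hs2]; ring
    rw [hz]
    field_simp
    ring_nf
    rw [hY]
    ring
  have hp1 : (0:ℝ) < p + 1 := by linarith
  have halpha' : (p - 1) / (2 * (p + 1)) = α := by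
    rw [hα]
    field_simp
    ring
  have hApow : t ^ ((p - 1) / (2 * (p + 1)) - 1) = A := by
    rw [hA]
    congr 1
    rw [halpha']
  have hexp_eq : Real.exp (-(x - ξ t) ^ 2 / (4 * t)) = Real.exp (-z ^ 2) := by
    congr 1
    rw [hz, hY, div_pow, mul_pow, hs2]
    ring
  have hsqrt_mul : Real.sqrt (π * t) = Real.sqrt π * s := by
    rw [hsdef]
    exact Real.sqrt_mul Real.pi_pos.le t
  have hα0 : 0 < α := by
    rw [← halpha']
    apply div_pos (by linarith) (by linarith)
  have hc0 : 0 < c := div_pos hθ hE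
  constructor
  · rw [hLHS, hApow, hexp_eq, hsqrt_mul, halpha', hc]
    field_simp
  · rw [hLHS]
    have hpos : 0 < c * (2 / Real.sqrt π) * Real.exp (-z ^ 2) * (M * α * A) / (2 * s) := by
      apply div_pos _ (by positivity)
      apply mul_pos _ (mul_pos (mul_pos hM hα0) hA0)
      apply mul_pos (mul_pos hc0 (by positivity)) (Real.exp_pos _)
    exact hpos.le
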